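/- For a chain endomorphism φ_• of a cochain complex V_• of finite-dimensional vector spaces and any stretch S of V_•, the alternating sums Σ_{i∈S} (-1)^i tr(φ_i) and Σ_{i∈S} (-1)^i tr(φ_i^H) are equal, where φ_i^H is the induced map on H^i(V_•). -/

import Mathlib

open CategoryTheory

/-- A *stretch* of a cochain complex `V` indexed by `ℤ` is a finite interval `[M, N]`
maximal with respect to the property that all differentials within it are nonzero. -/
def IsStretch {k : Type*} [Field k] (V : CochainComplex (ModuleCat k) ℤ)
    (M N : ℤ) : Prop :=
  M ≤ N ∧ (∀ i : ℤ, M ≤ i → i < N → V.d i (i + 1) ≠ 0) ∧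
    V.d (M - 1) M = 0 ∧ V.d N (N + 1) = 0

namespace StretchAux

open LinearMap
variable {k : Type*} [Field k]

lemma trace_prod_decomp {P Q : Type*} [AddCommGroup P] [Module k P] [AddCommGroup Q] [Module k Q]
    [FiniteDimensional k P] [FiniteDimensional k Q] (g : (P × Q) →ₗ[k] (P × Q)) :
    trace k (P × Q) g = trace k P (fst k P Q ∘ₗ g ∘ₗ inl k P Q)
      + trace k Q (snd k P Q ∘ₗ g ∘ₗ inr k P Q) := by
  have hg : g = (inl k P Q ∘ₗ (fst k P Q ∘ₗ g)) + (inr k P Q ∘ₗ (snd k P Q ∘ₗ g)) := by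
    ext x <;> simp
  calc trace k (P × Q) g
      = trace k (P × Q) (inl k P Q ∘ₗ (fst k P Q ∘ₗ g))
        + trace k (P × Q) (inr k P Q ∘ₗ (snd k P Q ∘ₗ g)) := by
        conv_lhs => rw [hg]
        exact map_add _ _ _
    _ = _ := by
        rw [trace_comp_comm' (fst k P Q ∘ₗ g) (inl k P Q), trace_comp_comm' (snd k P Q ∘ₗ g) (inr k P Q)]
        simp [comp_assoc]

lemma trace_eq_trace_restrict_add_trace_mapQ {M : Type*} [AddCommGroup M] [Module k M]
    [FiniteDimensional k M] (p : Submodule k M) (f : M →ₗ[k] M)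
    (h : ∀ x ∈ p, f x ∈ p) :
    trace k M f = trace k p (f.restrict h) + trace k (M ⧸ p) (p.mapQ p f h) := by
  obtain ⟨q, hq⟩ := Submodule.exists_isCompl p
  set e := Submodule.prodEquivOfIsCompl p q hq with he
  have h1 : trace k M f = trace k (p × q) (e.symm.conj f) := (trace_conj' f e.symm).symm
  rw [h1, trace_prod_decomp]
  congr 1
  · congr 1
    ext x
    have h2 : f x.val ∈ p := h x.val x.2
    have hev : e (x, (0 : q)) = x.val := by rw [he, Submodule.coe_prodEquivOfIsCompl']; simp
    have hsy : e.symm (f x.val) = (⟨f x.val, h2⟩, 0) := by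
      rw [LinearEquiv.symm_apply_eq, he, Submodule.coe_prodEquivOfIsCompl']
      simp
    simp only [LinearMap.coe_comp, Function.comp_apply, LinearEquiv.conj_apply, inl_apply,
      LinearEquiv.coe_coe, restrict_coe_apply, LinearEquiv.symm_symm, hev, hsy, fst_apply]
  · set B := (snd k p q ∘ₗ (e.symm.conj f) ∘ₗ inr k p q) with hB
    set e2 := Submodule.quotientEquivOfIsCompl p q hq with he2
    have key : p.mapQ p f h = e2.symm.conj B := by
      apply LinearMap.ext
      intro z
      set x := e2 z with hx
      have hz : z = Submodule.Quotient.mk x.val := by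
        rw [← Submodule.quotientEquivOfIsCompl_symm_apply p q hq, ← he2, hx,
          LinearEquiv.symm_apply_apply]
      have hmq : p.mapQ p f h z = Submodule.Quotient.mk (f x.val) := by
        conv_lhs => rw [hz]
        exact Submodule.mapQ_apply _ _ _ _
      have hcj : e2.symm.conj B z = Submodule.Quotient.mk ((B x).val) := by
        rw [LinearEquiv.conj_apply]
        simp only [LinearMap.coe_comp, Function.comp_apply, LinearEquiv.coe_coe, LinearEquiv.symm_symm]
        rw [he2, Submodule.quotientEquivOfIsCompl_symm_apply]
      rw [hmq, hcj, hB]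
      simp only [LinearMap.coe_comp, Function.comp_apply, inr_apply, snd_apply, LinearEquiv.conj_apply,
        LinearEquiv.coe_coe, LinearEquiv.symm_symm]
      have hev2 : e ((0 : p), x) = x.val := by rw [he, Submodule.coe_prodEquivOfIsCompl']; simp
      rw [hev2]
      have hsum : ((e.symm (f x.val)).1 : M) + ((e.symm (f x.val)).2 : M) = f x.val := by
        conv_rhs => rw [← e.apply_symm_apply (f x.val)]
        rw [he, Submodule.coe_prodEquivOfIsCompl']
      rw [Submodule.Quotient.eq]
      set y := f x.val with hy
      set a1 := ((e.symm y).1 : M) with ha1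
      set a2 := ((e.symm y).2 : M) with ha2
      have h3 : y - a2 = a1 := by rw [← hsum]; abel
      rw [h3, ha1]
      exact (e.symm y).1.2
    rw [key, trace_conj']

lemma trace_eq_of_linearEquiv {M N : Type*} [AddCommGroup M] [Module k M] [AddCommGroup N]
    [Module k N] [FiniteDimensional k M] (e : M ≃ₗ[k] N) (f : M →ₗ[k] M) (g : N →ₗ[k] N)
    (hcomm : ∀ x, e (f x) = g (e x)) : trace k M f = trace k N g := by
  have : g = e.conj f := by
    ext x
    rw [LinearEquiv.conj_apply]
    simp only [LinearMap.coe_comp, Function.comp_apply, LinearEquiv.coe_coe]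
    rw [hcomm, e.apply_symm_apply]
  rw [this, trace_conj']

open CategoryTheory

-- trace of homologyMap equals trace of explicit induced map on ker/im
lemma trace_homologyMap_eq (S : CategoryTheory.ShortComplex (ModuleCat k)) (ψ : S ⟶ S)
    [FiniteDimensional k S.X₂]
    (hK : ∀ x ∈ LinearMap.ker S.g.hom, ψ.τ₂ x ∈ LinearMap.ker S.g.hom)
    (hB : ∀ x ∈ LinearMap.range S.moduleCatToCycles,
      ψ.τ₂.hom.restrict hK x ∈ LinearMap.range S.moduleCatToCycles) :
    trace k S.homology (CategoryTheory.ShortComplex.homologyMap ψ).hom =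
      trace k S.moduleCatLeftHomologyData.H
        ((LinearMap.range S.moduleCatToCycles).mapQ (LinearMap.range S.moduleCatToCycles)
          (ψ.τ₂.hom.restrict hK) hB) := by
  set ρ := ψ.τ₂.hom.restrict hK with hρ
  set φH := (LinearMap.range S.moduleCatToCycles).mapQ (LinearMap.range S.moduleCatToCycles) ρ hB
    with hφH
  let γ : ShortComplex.LeftHomologyMapData ψ S.moduleCatLeftHomologyData
      S.moduleCatLeftHomologyData :=
    ⟨ModuleCat.ofHom ρ, ModuleCat.ofHom φH, rfl, by
        apply ModuleCat.hom_ext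
        apply LinearMap.ext
        intro x
        apply Subtype.ext
        exact (LinearMap.congr_fun (ModuleCat.hom_ext_iff.mp ψ.comm₁₂) x).symm,
      ModuleCat.hom_ext <| Submodule.mapQ_mkQ (LinearMap.range S.moduleCatToCycles)
        (LinearMap.range S.moduleCatToCycles) ρ (h := hB)⟩
  have heq := γ.homologyMap_eq
  haveI : FiniteDimensional k S.moduleCatLeftHomologyData.H :=
    inferInstanceAs (FiniteDimensional k
      (↥(LinearMap.ker S.g.hom) ⧸ LinearMap.range S.moduleCatToCycles))
  set e := S.moduleCatLeftHomologyData.homologyIso with he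
  refine (trace_eq_of_linearEquiv (e.symm.toLinearEquiv :
      (S.moduleCatLeftHomologyData.H : Type _) ≃ₗ[k] S.homology) φH _ ?_).symm
  intro x
  show e.inv.hom (φH x) = ShortComplex.homologyMap ψ (e.inv.hom x)
  rw [heq]
  show _ = (e.inv.hom ∘ₗ (φH ∘ₗ e.hom.hom)) (e.inv.hom x)
  simp only [LinearMap.coe_comp, Function.comp_apply]
  congr 1
  show φH x = φH (e.hom.hom (e.inv.hom x))
  congr 1
  exact (LinearMap.congr_fun (ModuleCat.hom_ext_iff.mp (e.inv_hom_id :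
    (e.inv ≫ e.hom : S.moduleCatLeftHomologyData.H ⟶ S.moduleCatLeftHomologyData.H) = 𝟙 _)) x).symm

lemma trace_tau2_decomp (S : CategoryTheory.ShortComplex (ModuleCat k)) (ψ : S ⟶ S)
    [FiniteDimensional k S.X₁] [FiniteDimensional k S.X₂] [FiniteDimensional k S.X₃]
    (hF : ∀ x ∈ LinearMap.range S.f.hom, ψ.τ₂.hom x ∈ LinearMap.range S.f.hom)
    (hG : ∀ x ∈ LinearMap.range S.g.hom, ψ.τ₃.hom x ∈ LinearMap.range S.g.hom) :
    trace k S.X₂ ψ.τ₂.hom =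
      trace k (LinearMap.range S.f.hom) (ψ.τ₂.hom.restrict hF)
      + trace k S.homology (CategoryTheory.ShortComplex.homologyMap ψ).hom
      + trace k (LinearMap.range S.g.hom) (ψ.τ₃.hom.restrict hG) := by
  have hK : ∀ x ∈ LinearMap.ker S.g.hom, ψ.τ₂.hom x ∈ LinearMap.ker S.g.hom := by
    intro x hx
    have h1 : S.g (ψ.τ₂.hom x) = ψ.τ₃.hom (S.g x) :=
      LinearMap.congr_fun (ModuleCat.hom_ext_iff.mp ψ.comm₂₃) x
    rw [LinearMap.mem_ker] at hx ⊢
    rw [h1, hx, map_zero]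
  have hB : ∀ x ∈ LinearMap.range S.moduleCatToCycles,
      ψ.τ₂.hom.restrict hK x ∈ LinearMap.range S.moduleCatToCycles := by
    rintro x ⟨a, rfl⟩
    refine ⟨ψ.τ₁ a, ?_⟩
    apply Subtype.ext
    show S.f (ψ.τ₁ a) = ψ.τ₂.hom (S.f a)
    exact (LinearMap.congr_fun (ModuleCat.hom_ext_iff.mp ψ.comm₁₂) a : _)
  -- step 1
  have step1 := trace_eq_trace_restrict_add_trace_mapQ (LinearMap.ker S.g.hom)
    ψ.τ₂.hom hK
  -- step 2 : quotient by kernel ≃ range of g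
  have step2 : trace k (S.X₂ ⧸ LinearMap.ker S.g.hom)
      ((LinearMap.ker S.g.hom).mapQ (LinearMap.ker S.g.hom) ψ.τ₂.hom hK) =
      trace k (LinearMap.range S.g.hom) (ψ.τ₃.hom.restrict hG) := by
    refine trace_eq_of_linearEquiv (S.g.hom.quotKerEquivRange) _ _ ?_
    intro z
    obtain ⟨y, rfl⟩ := Submodule.mkQ_surjective _ z
    rw [Submodule.mkQ_apply, Submodule.mapQ_apply]
    apply Subtype.ext
    rw [LinearMap.quotKerEquivRange_apply_mk]
    show S.g (ψ.τ₂.hom y) = (ψ.τ₃.hom) (S.g y)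
    exact (LinearMap.congr_fun (ModuleCat.hom_ext_iff.mp ψ.comm₂₃) y : _)
  -- step 3
  have step3 := trace_eq_trace_restrict_add_trace_mapQ
    (LinearMap.range S.moduleCatToCycles) (ψ.τ₂.hom.restrict hK) hB
  -- step 4 : range of toCycles ≃ range of f
  have step4 : trace k (LinearMap.range S.moduleCatToCycles)
      ((ψ.τ₂.hom.restrict hK).restrict hB) =
      trace k (LinearMap.range S.f.hom) (ψ.τ₂.hom.restrict hF) := by
    have hj : ∀ x ∈ LinearMap.range S.moduleCatToCycles,
        (LinearMap.ker S.g.hom).subtype x ∈ LinearMap.range S.f.hom := by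
      rintro x ⟨a, rfl⟩
      exact ⟨a, rfl⟩
    set j := ((LinearMap.ker S.g.hom).subtype).restrict hj with hjdef
    have hbij : Function.Bijective j := by
      constructor
      · intro a b hab
        apply Subtype.ext
        apply Subtype.ext
        exact (congrArg Subtype.val hab : _)
      · rintro ⟨y, a, rfl⟩
        exact ⟨⟨S.moduleCatToCycles a, ⟨a, rfl⟩⟩, rfl⟩
    refine trace_eq_of_linearEquiv (LinearEquiv.ofBijective j hbij) _ _ ?_
    intro x
    apply Subtype.ext
    rfl
  -- step 5
  have step5 := trace_homologyMap_eq S ψ hK hB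
  rw [step1, step2, step3, step4, step5]
  have hrfl : trace k (↥(LinearMap.ker S.g.hom) ⧸ LinearMap.range S.moduleCatToCycles)
        ((LinearMap.range S.moduleCatToCycles).mapQ (LinearMap.range S.moduleCatToCycles)
          (ψ.τ₂.hom.restrict hK) hB) =
      trace k S.moduleCatLeftHomologyData.H
        ((LinearMap.range S.moduleCatToCycles).mapQ (LinearMap.range S.moduleCatToCycles)
          (ψ.τ₂.hom.restrict hK) hB) := rfl
  rw [hrfl]
  try ring

lemma trace_of_subsingleton {P : Type*} [AddCommGroup P] [Module k P] [Subsingleton P]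
    (f : P →ₗ[k] P) : trace k P f = 0 := by
  rw [Subsingleton.elim f 0, map_zero]

lemma telescope_sum (u : ℤ → k) (M : ℤ) : ∀ N : ℤ, M ≤ N →
    ∑ i ∈ Finset.Icc M N, (u i - u (i + 1)) = u M - u (N + 1) := by
  refine Int.le_induction ?_ ?_
  · rw [Finset.Icc_self, Finset.sum_singleton]
  · intro N hMN ih
    have hins : Finset.Icc M (N + 1) = insert (N + 1) (Finset.Icc M N) := by
      ext x
      simp only [Finset.mem_Icc, Finset.mem_insert]
      omega
    rw [hins, Finset.sum_insert (by simp), ih]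
    ring


end StretchAux

section
open StretchAux LinearMap HomologicalComplex

/-- For any chain endomorphism and any stretch, the alternating trace sum over the
stretch equals the alternating trace sum on cohomology. -/
theorem stmt_6 {k : Type*} [Field k] (V : CochainComplex (ModuleCat k) ℤ)
    [∀ i : ℤ, FiniteDimensional k (V.X i)] (φ : V ⟶ V)
    (M N : ℤ) (hS : IsStretch V M N) :
    ∑ i ∈ Finset.Icc M N, (-1 : k) ^ i * LinearMap.trace k (V.X i) (φ.f i).hom =
      ∑ i ∈ Finset.Icc M N, (-1 : k) ^ i *
        LinearMap.trace k (V.homology i) (HomologicalComplex.homologyMap φ i).hom := by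
  obtain ⟨hMN, -, hdM, hdN⟩ := hS
  have hT : ∀ a b : ℤ, ∀ x ∈ LinearMap.range (V.d a b).hom,
      (φ.f b).hom x ∈ LinearMap.range (V.d a b).hom := by
    rintro a b x ⟨y, rfl⟩
    exact ⟨φ.f a y, (LinearMap.congr_fun (ModuleCat.hom_ext_iff.mp (φ.comm a b)) y : _)⟩
  set T : ℤ → ℤ → k := fun a b =>
    trace k (LinearMap.range (V.d a b).hom)
      ((φ.f b).hom.restrict (hT a b)) with hTdef
  have key : ∀ i : ℤ, trace k (V.X i) (φ.f i).hom =
      T (i - 1) i + trace k (V.homology i) (homologyMap φ i).hom + T i (i + 1) := by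
    intro i
    set S' := V.sc' (i - 1) i (i + 1) with hS'
    haveI : FiniteDimensional k S'.X₁ := inferInstanceAs (FiniteDimensional k (V.X (i - 1)))
    haveI : FiniteDimensional k S'.X₂ := inferInstanceAs (FiniteDimensional k (V.X i))
    haveI : FiniteDimensional k S'.X₃ := inferInstanceAs (FiniteDimensional k (V.X (i + 1)))
    set ψ' := (shortComplexFunctor' (ModuleCat k) (ComplexShape.up ℤ) (i - 1) i (i + 1)).map φ
      with hψ'
    have hdec := trace_tau2_decomp S' ψ' (hT (i - 1) i) (hT i (i + 1))
    have hi : (ComplexShape.up ℤ).prev i = i - 1 :=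
      ComplexShape.prev_eq' _ (by simp [ComplexShape.up_Rel])
    have hk : (ComplexShape.up ℤ).next i = i + 1 :=
      ComplexShape.next_eq' _ (by simp [ComplexShape.up_Rel])
    set ι := homologyFunctorIso' (ModuleCat k) (ComplexShape.up ℤ) (i - 1) i (i + 1) hi hk with hι
    haveI : FiniteDimensional k S'.moduleCatLeftHomologyData.H :=
      inferInstanceAs (FiniteDimensional k
        (↥(LinearMap.ker S'.g.hom) ⧸ LinearMap.range S'.moduleCatToCycles))
    haveI : FiniteDimensional k S'.homology :=
      Module.Finite.equiv (S'.moduleCatHomologyIso.symm.toLinearEquiv)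
    have h2 : trace k S'.homology (CategoryTheory.ShortComplex.homologyMap ψ').hom =
        trace k (V.homology i) (homologyMap φ i).hom := by
      set E := (ι.app V).toLinearEquiv with hE
      haveI : FiniteDimensional k ((shortComplexFunctor' (ModuleCat k) (ComplexShape.up ℤ)
          (i - 1) i (i + 1) ⋙ CategoryTheory.ShortComplex.homologyFunctor (ModuleCat k)).obj V) :=
        inferInstanceAs (FiniteDimensional k S'.homology)
      refine trace_eq_of_linearEquiv E.symm _ _ ?_
      intro x
      have h3 := LinearMap.congr_fun (ModuleCat.hom_ext_iff.mp (ι.hom.naturality φ)) (E.symm x)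
      have h4 : E (homologyMap φ i (E.symm x)) =
          CategoryTheory.ShortComplex.homologyMap ψ' (E (E.symm x)) := h3
      rw [E.apply_symm_apply] at h4
      have h5 := congrArg E.symm h4
      replace h5 := (E.symm_apply_apply _).symm.trans h5
      exact h5.symm
    rw [← h2]
    exact hdec
  set u : ℤ → k := fun j => (-1 : k) ^ j * T (j - 1) j with hu
  have step : ∀ i : ℤ, (-1 : k) ^ i * trace k (V.X i) (φ.f i).hom =
      (-1 : k) ^ i * trace k (V.homology i) (homologyMap φ i).hom + (u i - u (i + 1)) := by
    intro i
    rw [key i, hu]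
    have e1 : T (i + 1 - 1) (i + 1) = T i (i + 1) := by congr 1; ring
    simp only []
    rw [e1, zpow_add₀ (by norm_num : (-1 : k) ≠ 0) i 1]
    ring
  rw [Finset.sum_congr rfl (fun i _ => step i), Finset.sum_add_distrib,
    telescope_sum u M N hMN]
  have hbotM : LinearMap.range (V.d (M - 1) M).hom = ⊥ := by
    rw [LinearMap.range_eq_bot]
    exact congrArg ModuleCat.Hom.hom hdM
  have hbotN : LinearMap.range (V.d N (N + 1)).hom = ⊥ := by
    rw [LinearMap.range_eq_bot]
    exact congrArg ModuleCat.Hom.hom hdN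
  haveI : Subsingleton ↥(LinearMap.range (V.d (M - 1) M).hom) := by
    rw [hbotM]; infer_instance
  haveI : Subsingleton ↥(LinearMap.range (V.d N (N + 1)).hom) := by
    rw [hbotN]; infer_instance
  have hM0 : T (M - 1) M = 0 := trace_of_subsingleton _
  have hN0 : T (N + 1 - 1) (N + 1) = 0 := by
    have : T (N + 1 - 1) (N + 1) = T N (N + 1) := by congr 1; ring
    rw [this]
    exact trace_of_subsingleton _
  have hum : u M = 0 := by simp only [hu]; rw [hM0, mul_zero]
  have hun : u (N + 1) = 0 := by simp only [hu]; rw [hN0, mul_zero]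
  rw [hum, hun]
  ring

end
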